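/- Let k be a field of characteristic p (p = 0 allowed), A an abelian variety over k of dimension g ≥ 1, and Γ = Gal(k̄/k). Suppose the prime-to-p torsion of Br(Ā × Ā^∨)^Γ is annihilated by a positive integer M. Then for every positive integer n not divisible by p: d_p(g)·M·End_Γ(A[n]) ⊆ End(A)/n ⊆ End_Γ(A[n]). In particular, if ℓ is a prime not dividing d_p(g)·M and ℓ ≠ p, then End_Γ(A[ℓ]) = End(A)/ℓ. -/

import Mathlib

/-- Silverberg's constant: `d_p(g) = |GL(2g,𝔽₃)|` if `p ≠ 3` and `|GL(2g,ℤ/4)|` if `p = 3`. -/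
noncomputable def dP (p g : ℕ) : ℕ :=
  if p = 3 then Nat.card (Matrix.GeneralLinearGroup (Fin (2 * g)) (ZMod 4))
  else Nat.card (Matrix.GeneralLinearGroup (Fin (2 * g)) (ZMod 3))

/-- The multiplicative group structure (composition) on `A ≃+ A`, as `AddAut.group` gave it in
the older Mathlib. -/
instance addEquivSelfMulGroup (A : Type*) [Add A] : Group (A ≃+ A) where
  mul g h := AddEquiv.trans h g
  one := AddEquiv.refl _
  inv := AddEquiv.symm
  mul_assoc _ _ _ := rfl
  one_mul _ := rfl
  mul_one _ := rfl
  inv_mul_cancel := AddEquiv.self_trans_symm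

/-- let `k` be a field of characteristic `p` (`p = 0` allowed), `A` an abelian
variety of dimension `g ≥ 1` over `k`, `Γ = Gal(k̄/k)`.  Suppose the prime-to-`p` torsion of
`Br(Ā × Ā^∨)^Γ` is annihilated by `M > 0`.  Then for every `n > 0` not divisible by `p`:
`d_p(g)·M·End_Γ(A[n]) ⊆ End(A)/n ⊆ End_Γ(A[n])`; in particular, if `ℓ = n` is a prime not
dividing `d_p(g)·M` and `≠ p`, then `End_Γ(A[ℓ]) = End(A)/ℓ`.

Abstraction: `T = A[n]` is a `ℤ/n`-module with Galois action `ρ`; `E = End(Ā)` is a ring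
with Galois action `ρE` whose image has order dividing `d_p(g)` (Silverberg), `End(A)` being
the invariants;  `red : E → End(T)` is the (Galois-equivariant) reduction with kernel `nE`;
`BrX = Br(Ā × Ā^∨)(p')`, and by the Künneth computation of the Brauer group of a product,
`End_{ℤ/n}(A[n])/(End(Ā)/n)` embeds `Γ`-equivariantly into `BrX` via `φ`. -/
theorem stmt18 (p g M n : ℕ) (hp : p = 0 ∨ p.Prime) (hg : 1 ≤ g) (hM : 0 < M) (hn : 0 < n)
    (hpn : ¬ p ∣ n)
    (Γ : Type) [Group Γ]
    (T : Type) [AddCommGroup T] [Module (ZMod n) T]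
    (ρ : Γ →* (T ≃ₗ[ZMod n] T))
    (E : Type) [Ring E]
    (ρE : Γ →* RingAut E)
    (hcard : Nat.card (Set.range fun γ : Γ => ρE γ) ∣ dP p g)
    (red : E →+* Module.End (ZMod n) T)
    (hredker : ∀ e : E, red e = 0 ↔ ∃ e' : E, e = n • e')
    (hredeq : ∀ (γ : Γ) (e : E),
      red (ρE γ e) = (ρ γ).toLinearMap ∘ₗ red e ∘ₗ (ρ γ).symm.toLinearMap)
    (BrX : Type) [AddCommGroup BrX]
    (ρB : Γ →* (BrX ≃+ BrX))
    (hMann : ∀ b : BrX, (∀ γ : Γ, ρB γ b = b) → M • b = 0)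
    (φ : Module.End (ZMod n) T →+ BrX)
    (hφeq : ∀ (γ : Γ) (f : Module.End (ZMod n) T),
      φ ((ρ γ).toLinearMap ∘ₗ f ∘ₗ (ρ γ).symm.toLinearMap) = ρB γ (φ f))
    (hφker : ∀ f : Module.End (ZMod n) T, φ f = 0 ↔ f ∈ Set.range red) :
    (∀ e : E, (∀ γ : Γ, ρE γ e = e) → ∀ γ : Γ,
      (ρ γ).toLinearMap ∘ₗ red e = red e ∘ₗ (ρ γ).toLinearMap) ∧
    (∀ f : Module.End (ZMod n) T,
      (∀ γ : Γ, (ρ γ).toLinearMap ∘ₗ f = f ∘ₗ (ρ γ).toLinearMap) →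
      ∃ e : E, (∀ γ : Γ, ρE γ e = e) ∧ red e = (dP p g * M : ℕ) • f) ∧
    (n.Prime → ¬ n ∣ dP p g * M →
      ∀ f : Module.End (ZMod n) T,
        (∀ γ : Γ, (ρ γ).toLinearMap ∘ₗ f = f ∘ₗ (ρ γ).toLinearMap) →
        ∃ e : E, (∀ γ : Γ, ρE γ e = e) ∧ red e = f) := by
  classical
  have part1 : ∀ e : E, (∀ γ : Γ, ρE γ e = e) → ∀ γ : Γ,
      (ρ γ).toLinearMap ∘ₗ red e = red e ∘ₗ (ρ γ).toLinearMap := by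
    intro e he γ
    have h := hredeq γ e
    rw [he γ] at h
    ext x
    have := congrArg (fun g : Module.End (ZMod n) T => g ((ρ γ) x)) h
    simpa using this.symm
  have hdP_pos : 0 < dP p g := by
    unfold dP
    split <;> exact Nat.card_pos
  have hcard_pos : 0 < Nat.card (Set.range fun γ : Γ => ρE γ) :=
    Nat.pos_of_dvd_of_pos hcard hdP_pos
  haveI hfin : Finite (Set.range fun γ : Γ => ρE γ) := (Nat.card_pos_iff.mp hcard_pos).2
  haveI : Finite ρE.range := by
    have : (ρE.range : Set (RingAut E)) = Set.range fun γ : Γ => ρE γ := by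
      ext x; simp [MonoidHom.mem_range]
    rw [show (ρE.range : Type) = ((ρE.range : Set (RingAut E)) : Type) from rfl, this]
    exact hfin
  haveI : Fintype ρE.range := Fintype.ofFinite _
  have hcards : Nat.card (Set.range fun γ : Γ => ρE γ) = Nat.card ρE.range := by
    apply Nat.card_congr
    exact (Equiv.setCongr (by ext x; simp [MonoidHom.mem_range])).symm
  have part2 : ∀ f : Module.End (ZMod n) T,
      (∀ γ : Γ, (ρ γ).toLinearMap ∘ₗ f = f ∘ₗ (ρ γ).toLinearMap) →
      ∃ e : E, (∀ γ : Γ, ρE γ e = e) ∧ red e = (dP p g * M : ℕ) • f := by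
    intro f hf
    have hinvφ : ∀ γ : Γ, ρB γ (φ f) = φ f := by
      intro γ
      rw [← hφeq]
      congr 1
      ext x
      have h := congrArg (fun g : Module.End (ZMod n) T => g ((ρ γ).symm x)) (hf γ)
      simpa using h
    have hzero : φ ((M : ℕ) • f) = 0 := by
      rw [map_nsmul]
      exact hMann (φ f) hinvφ
    obtain ⟨e₀, he₀⟩ : (M : ℕ) • f ∈ Set.range red := (hφker _).mp hzero
    have hcomm : ∀ γ : Γ, (ρ γ).toLinearMap ∘ₗ red e₀ = red e₀ ∘ₗ (ρ γ).toLinearMap := by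
      intro γ
      rw [he₀]
      ext x
      have h := congrArg (fun g : Module.End (ZMod n) T => g x) (hf γ)
      simp only [LinearMap.comp_apply, LinearMap.smul_apply,
        LinearEquiv.coe_coe] at h ⊢
      rw [map_nsmul, h]
    have hred_const : ∀ γ : Γ, red (ρE γ e₀) = red e₀ := by
      intro γ
      rw [hredeq]
      ext x
      have h := congrArg (fun g : Module.End (ZMod n) T => g ((ρ γ).symm x)) (hcomm γ)
      simpa using h
    set e₁ : E := ∑ σ : ρE.range, (σ : RingAut E) e₀ with he₁
    have hinv : ∀ γ : Γ, ρE γ e₁ = e₁ := by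
      intro γ
      rw [he₁, map_sum]
      exact Fintype.sum_bijective (fun σ => (⟨ρE γ, ⟨γ, rfl⟩⟩ : ρE.range) * σ)
        (Group.mulLeft_bijective _) _ _ (fun σ => rfl)
    have hred_e₁ : red e₁ = (Nat.card ρE.range * M) • f := by
      rw [he₁, map_sum]
      have hconst : ∀ σ : ρE.range, red ((σ : RingAut E) e₀) = (M : ℕ) • f := by
        rintro ⟨σ, γ', rfl⟩
        rw [hred_const, he₀]
      rw [Finset.sum_congr rfl (fun σ _ => hconst σ), Finset.sum_const,
        Finset.card_univ, smul_smul, Nat.card_eq_fintype_card]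
    obtain ⟨c, hc⟩ := hcard
    rw [hcards] at hc
    refine ⟨c • e₁, fun γ => by rw [map_nsmul, hinv], ?_⟩
    rw [map_nsmul, hred_e₁, smul_smul]
    congr 1
    calc c * (Nat.card ρE.range * M) = Nat.card ρE.range * c * M := by ring
      _ = dP p g * M := by rw [← hc]
  refine ⟨part1, part2, ?_⟩
  intro hnp hndvd f hf
  obtain ⟨e, hinv, hred⟩ := part2 f hf
  have hcop : IsCoprime (n : ℤ) ((dP p g * M : ℕ) : ℤ) := by
    rw [Int.isCoprime_iff_gcd_eq_one]
    rw [Int.gcd_natCast_natCast]; exact (Nat.Prime.coprime_iff_not_dvd hnp).mpr hndvd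
  obtain ⟨u, v, huv⟩ := hcop
  have hnf : (n : ℤ) • f = 0 := by
    rw [natCast_zsmul, ← Nat.cast_smul_eq_nsmul (ZMod n), ZMod.natCast_self, zero_smul]
  refine ⟨v • e, fun γ => by rw [map_zsmul, hinv], ?_⟩
  rw [map_zsmul, hred, ← natCast_zsmul, smul_smul]
  have h1 : v * ((dP p g * M : ℕ) : ℤ) = 1 - u * n := by linarith
  rw [h1, sub_smul, one_smul, mul_smul, hnf, smul_zero, sub_zero]
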